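/- arXiv:1609.00771 — 6 statements merged into one kernel-verified Lean document; each statement's English description precedes it below -/
import Mathlib

section
/- Every rational sector in R^2 can be partitioned into finitely many regular sectors: if v1, v2 ∈ Z^2 \ {0} are linearly independent over R, then there exist primitive lattice points u_0 = v1', u_1, ..., u_d = v2' (where v1', v2' are the primitive generators of the rays R_+ v1, R_+ v2) lying in the sector R_+ v1 + R_+ v2, ordered counterclockwise, such that |det[u_{i-1} u_i]| = 1 for all i = 1, ..., d. -/
def dt (x y : ℤ × ℤ) : ℤ := x.1 * y.2 - x.2 * y.1

lemma pluecker (a w1 w2 x : ℤ × ℤ) :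
    dt w1 w2 * dt a x = dt x w2 * dt a w1 + dt w1 x * dt a w2 := by
  simp only [dt]; ring

lemma cramer1 (a b x : ℤ × ℤ) : dt a b * x.1 = dt x b * a.1 + dt a x * b.1 := by
  simp only [dt]; ring

lemma cramer2 (a b x : ℤ × ℤ) : dt a b * x.2 = dt x b * a.2 + dt a x * b.2 := by
  simp only [dt]; ring

lemma dt_self (a : ℤ × ℤ) : dt a a = 0 := by simp only [dt]; ring

lemma core (D : ℕ) : ∀ w1 w2 : ℤ × ℤ, IsCoprime w1.1 w1.2 → IsCoprime w2.1 w2.2 →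
    dt w1 w2 = (D : ℤ) → 0 < D →
    ∃ (d : ℕ) (u : ℕ → ℤ × ℤ), 1 ≤ d ∧ u 0 = w1 ∧ u d = w2 ∧
      (∀ i ≤ d, IsCoprime (u i).1 (u i).2) ∧
      (∀ i ≤ d, 0 ≤ dt w1 (u i) ∧ 0 ≤ dt (u i) w2) ∧
      (∀ i, 1 ≤ i → i ≤ d → dt (u (i-1)) (u i) = 1) := by
  induction D using Nat.strong_induction_on with
  | _ D ih =>
    intro w1 w2 h1 h2 hD hpos
    have hDz : (0:ℤ) < (D:ℤ) := by exact_mod_cast hpos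
    by_cases hD1 : D = 1
    · subst hD1
      refine ⟨1, fun i => if i = 0 then w1 else w2, le_refl 1, by simp, by simp, ?_, ?_, ?_⟩
      · intro i hi
        by_cases h : i = 0 <;> simp [h, h1, h2]
      · intro i hi
        by_cases h : i = 0 <;> simp only [if_pos, if_neg, h, if_true, if_false]
        · exact ⟨le_of_eq (dt_self w1).symm, by rw [hD]; exact zero_le_one⟩
        · exact ⟨by rw [hD]; exact zero_le_one, le_of_eq (dt_self w2).symm⟩
      · intro i hi1 hi2
        have : i = 1 := by omega
        subst this
        simpa using hD
    · -- D ≥ 2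
      have hD2 : 2 ≤ D := by omega
      obtain ⟨x, y, hxy⟩ := id h1
      set A : ℤ := (-y) * w2.2 - x * w2.1 with hA
      set t : ℤ := -(A / (D : ℤ)) with ht
      set u : ℤ × ℤ := (-y + t * w1.1, x + t * w1.2) with hu
      have hdu : dt w1 u = 1 := by
        show w1.1 * (x + t * w1.2) - w1.2 * (-y + t * w1.1) = 1
        linear_combination hxy
      have hDe : w1.1 * w2.2 - w1.2 * w2.1 = (D : ℤ) := hD
      have hr : dt u w2 = A % (D : ℤ) := by
        show (-y + t * w1.1) * w2.2 - (x + t * w1.2) * w2.1 = A % (D:ℤ)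
        rw [Int.emod_def, hA, ht]
        linear_combination (-(((-y) * w2.2 - x * w2.1) / (D:ℤ))) * hDe
      have hr0 : 0 ≤ dt u w2 := by rw [hr]; exact Int.emod_nonneg _ (by omega)
      have hrD : dt u w2 < (D:ℤ) := by rw [hr]; exact Int.emod_lt_of_pos _ hDz
      have hrne : dt u w2 ≠ 0 := by
        intro h0
        have h2' : dt w2 u = - dt u w2 := by simp only [dt]; ring
        have hc1 : w2.1 = (D:ℤ) * u.1 := by
          have hcr := cramer1 w1 u w2
          rw [hdu, h2', h0, hD] at hcr
          linarith
        have hc2 : w2.2 = (D:ℤ) * u.2 := by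
          have hcr := cramer2 w1 u w2
          rw [hdu, h2', h0, hD] at hcr
          linarith
        obtain ⟨a, b, hab⟩ := h2
        have hdvd : (D:ℤ) ∣ 1 := ⟨a * u.1 + b * u.2, by rw [← hab, hc1, hc2]; ring⟩
        have := Int.le_of_dvd one_pos hdvd
        omega
      have hrpos : 0 < dt u w2 := lt_of_le_of_ne hr0 (Ne.symm hrne)
      have hupr : IsCoprime u.1 u.2 := ⟨-w1.2, w1.1, by
        show -w1.2 * (-y + t * w1.1) + w1.1 * (x + t * w1.2) = 1
        linear_combination hxy⟩
      have hrcast : dt u w2 = ((dt u w2).toNat : ℤ) := (Int.toNat_of_nonneg hr0).symm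
      obtain ⟨d', u', hd', hu'0, hu'd, hcop', hsec', hdet'⟩ :=
        ih (dt u w2).toNat (by omega) u w2 hupr h2 hrcast (by omega)
      refine ⟨d' + 1, fun i => if i = 0 then w1 else u' (i - 1), by omega, by simp, ?_, ?_, ?_, ?_⟩
      · simp [hu'd]
      · intro i hi
        by_cases h : i = 0
        · simp only [if_pos h]; exact h1
        · simp only [if_neg h]; exact hcop' (i - 1) (by omega)
      · intro i hi
        by_cases h : i = 0
        · simp only [if_pos h]
          exact ⟨le_of_eq (dt_self w1).symm, by rw [hD]; exact le_of_lt hDz⟩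
        · simp only [if_neg h]
          obtain ⟨hs1, hs2⟩ := hsec' (i - 1) (by omega)
          refine ⟨?_, hs2⟩
          have hp := pluecker w1 u w2 (u' (i - 1))
          rw [hdu, hD] at hp
          by_contra hneg
          push_neg at hneg
          have hneg2 : dt u w2 * dt w1 (u' (i-1)) < 0 := mul_neg_of_pos_of_neg hrpos hneg
          have hterm : 0 ≤ dt u (u' (i-1)) * (D:ℤ) := mul_nonneg hs1 (le_of_lt hDz)
          linarith
      · intro i hi1 hi2
        by_cases h : i = 1
        · subst h
          simp only [if_neg (by omega : ¬ (1:ℕ) = 0)]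
          norm_num
          rw [hu'0]
          exact hdu
        · have h0 : ¬ (i - 1 = 0) := by omega
          simp only [if_neg h0, if_neg (by omega : ¬ i = 0)]
          exact hdet' (i - 1) (by omega) (by omega)

lemma prim (v : ℤ × ℤ) (hv : v ≠ 0) :
    ∃ (g : ℤ) (w : ℤ × ℤ), 0 < g ∧ IsCoprime w.1 w.2 ∧ v.1 = g * w.1 ∧ v.2 = g * w.2 := by
  have hg : 0 < Int.gcd v.1 v.2 := Int.gcd_pos_iff.mpr (by
    by_contra h; push_neg at h; exact hv (Prod.ext h.1 h.2))
  have hgz : (0 : ℤ) < (Int.gcd v.1 v.2 : ℤ) := by exact_mod_cast hg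
  refine ⟨(Int.gcd v.1 v.2 : ℤ), (v.1 / (Int.gcd v.1 v.2 : ℤ), v.2 / (Int.gcd v.1 v.2 : ℤ)),
    hgz, ?_, ?_, ?_⟩
  · rw [Int.isCoprime_iff_gcd_eq_one]
    exact Int.gcd_div_gcd_div_gcd hg
  · exact (Int.mul_ediv_cancel' (Int.gcd_dvd_left _ _)).symm
  · exact (Int.mul_ediv_cancel' (Int.gcd_dvd_right _ _)).symm
lemma main_pos (v1 v2 : ℤ × ℤ) (hv1 : v1 ≠ 0) (hv2 : v2 ≠ 0) (hD : 0 < dt v1 v2) :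
    ∃ (d : ℕ) (u : ℕ → ℤ × ℤ), 1 ≤ d ∧
      (∀ i ≤ d, IsCoprime (u i).1 (u i).2) ∧
      (∃ c : ℝ, 0 < c ∧ (v1.1 : ℝ) = c * (u 0).1 ∧ (v1.2 : ℝ) = c * (u 0).2) ∧
      (∃ c : ℝ, 0 < c ∧ (v2.1 : ℝ) = c * (u d).1 ∧ (v2.2 : ℝ) = c * (u d).2) ∧
      (∀ i ≤ d, ∃ a b : ℝ, 0 ≤ a ∧ 0 ≤ b ∧
        ((u i).1 : ℝ) = a * v1.1 + b * v2.1 ∧ ((u i).2 : ℝ) = a * v1.2 + b * v2.2) ∧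
      (∀ i, 1 ≤ i → i ≤ d →
        |(u (i-1)).1 * (u i).2 - (u (i-1)).2 * (u i).1| = 1 ∧
        0 < ((u (i-1)).1 * (u i).2 - (u (i-1)).2 * (u i).1) *
            (v1.1 * v2.2 - v1.2 * v2.1)) := by
  obtain ⟨g1, w1, hg1, hw1, e11, e12⟩ := prim v1 hv1
  obtain ⟨g2, w2, hg2, hw2, e21, e22⟩ := prim v2 hv2
  have hfac : dt v1 v2 = g1 * g2 * dt w1 w2 := by
    simp only [dt]; rw [e11, e12, e21, e22]; ring
  have hDw : 0 < dt w1 w2 := by nlinarith [mul_pos hg1 hg2, hfac, hD]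
  have hcast : dt w1 w2 = ((dt w1 w2).toNat : ℤ) := (Int.toNat_of_nonneg hDw.le).symm
  obtain ⟨d, u, hd, hu0, hud, hcop, hsec, hdet⟩ :=
    core (dt w1 w2).toNat w1 w2 hw1 hw2 hcast (by omega)
  have hg1R : (0:ℝ) < (g1:ℝ) := by exact_mod_cast hg1
  have hg2R : (0:ℝ) < (g2:ℝ) := by exact_mod_cast hg2
  have hDR : (0:ℝ) < ((dt w1 w2 : ℤ):ℝ) := by exact_mod_cast hDw
  refine ⟨d, u, hd, hcop, ?_, ?_, ?_, ?_⟩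
  · exact ⟨(g1:ℝ), hg1R, by rw [hu0]; exact_mod_cast e11, by rw [hu0]; exact_mod_cast e12⟩
  · exact ⟨(g2:ℝ), hg2R, by rw [hud]; exact_mod_cast e21, by rw [hud]; exact_mod_cast e22⟩
  · intro i hi
    obtain ⟨hp, hq⟩ := hsec i hi
    have hcr1 : dt w1 w2 * (u i).1 = dt (u i) w2 * w1.1 + dt w1 (u i) * w2.1 := cramer1 w1 w2 (u i)
    have hcr2 : dt w1 w2 * (u i).2 = dt (u i) w2 * w1.2 + dt w1 (u i) * w2.2 := cramer2 w1 w2 (u i)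
    have hcr1R : ((dt w1 w2 : ℤ):ℝ) * ((u i).1 : ℝ)
        = (dt (u i) w2 : ℝ) * (w1.1 : ℝ) + (dt w1 (u i) : ℝ) * (w2.1 : ℝ) := by exact_mod_cast hcr1
    have hcr2R : ((dt w1 w2 : ℤ):ℝ) * ((u i).2 : ℝ)
        = (dt (u i) w2 : ℝ) * (w1.2 : ℝ) + (dt w1 (u i) : ℝ) * (w2.2 : ℝ) := by exact_mod_cast hcr2
    have hpR : (0:ℝ) ≤ (dt w1 (u i) : ℝ) := by exact_mod_cast hp
    have hqR : (0:ℝ) ≤ (dt (u i) w2 : ℝ) := by exact_mod_cast hq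
    have hv11 : (v1.1:ℝ) = (g1:ℝ) * (w1.1:ℝ) := by exact_mod_cast e11
    have hv12 : (v1.2:ℝ) = (g1:ℝ) * (w1.2:ℝ) := by exact_mod_cast e12
    have hv21 : (v2.1:ℝ) = (g2:ℝ) * (w2.1:ℝ) := by exact_mod_cast e21
    have hv22 : (v2.2:ℝ) = (g2:ℝ) * (w2.2:ℝ) := by exact_mod_cast e22
    refine ⟨(dt (u i) w2 : ℝ) / (((dt w1 w2 : ℤ):ℝ) * (g1:ℝ)),
            (dt w1 (u i) : ℝ) / (((dt w1 w2 : ℤ):ℝ) * (g2:ℝ)),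
            div_nonneg hqR (by positivity), div_nonneg hpR (by positivity), ?_, ?_⟩
    · rw [hv11, hv21]
      field_simp
      linear_combination hcr1R
    · rw [hv12, hv22]
      field_simp
      linear_combination hcr2R
  · intro i hi1 hi2
    have h1 := hdet i hi1 hi2
    simp only [dt] at h1
    rw [h1]
    have hD' := hD
    simp only [dt] at hD'
    constructor
    · norm_num
    · linarith

/-- every rational sector can be partitioned into finitely many regular
sectors: there is a counterclockwise-ordered chain of primitive lattice points in the
sector, starting at the primitive generator of ℝ₊v1 and ending at that of ℝ₊v2, with
consecutive determinants of absolute value 1. -/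
theorem stmt2 (v1 v2 : ℤ × ℤ) (hv1 : v1 ≠ 0) (hv2 : v2 ≠ 0)
    (hind : ∀ a b : ℝ, a * v1.1 + b * v2.1 = 0 → a * v1.2 + b * v2.2 = 0 → a = 0 ∧ b = 0) :
    ∃ (d : ℕ) (u : ℕ → ℤ × ℤ), 1 ≤ d ∧
      (∀ i ≤ d, IsCoprime (u i).1 (u i).2) ∧
      (∃ c : ℝ, 0 < c ∧ (v1.1 : ℝ) = c * (u 0).1 ∧ (v1.2 : ℝ) = c * (u 0).2) ∧
      (∃ c : ℝ, 0 < c ∧ (v2.1 : ℝ) = c * (u d).1 ∧ (v2.2 : ℝ) = c * (u d).2) ∧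
      (∀ i ≤ d, ∃ a b : ℝ, 0 ≤ a ∧ 0 ≤ b ∧
        ((u i).1 : ℝ) = a * v1.1 + b * v2.1 ∧ ((u i).2 : ℝ) = a * v1.2 + b * v2.2) ∧
      (∀ i, 1 ≤ i → i ≤ d →
        |(u (i-1)).1 * (u i).2 - (u (i-1)).2 * (u i).1| = 1 ∧
        0 < ((u (i-1)).1 * (u i).2 - (u (i-1)).2 * (u i).1) *
            (v1.1 * v2.2 - v1.2 * v2.1)) := by
  have hne : dt v1 v2 ≠ 0 := by
    intro h0
    have h0R : (v1.1 : ℝ) * v2.2 - (v1.2 : ℝ) * v2.1 = 0 := by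
      have : ((v1.1 * v2.2 - v1.2 * v2.1 : ℤ) : ℝ) = 0 := by exact_mod_cast congrArg (Int.cast : ℤ → ℝ) h0
      push_cast at this
      linarith
    obtain ⟨ha, hb⟩ := hind (v2.2 : ℝ) (-(v1.2 : ℝ)) (by linarith) (by ring)
    obtain ⟨hc, hdd⟩ := hind (v2.1 : ℝ) (-(v1.1 : ℝ)) (by ring) (by linarith)
    apply hv1
    have h1 : v1.1 = 0 := by exact_mod_cast (by linarith : (v1.1:ℝ) = 0)
    have h2 : v1.2 = 0 := by exact_mod_cast (by linarith : (v1.2:ℝ) = 0)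
    exact Prod.ext h1 h2
  rcases lt_or_gt_of_ne hne with hneg | hpos
  · -- dt v1 v2 < 0 : apply main_pos to (v2, v1) and reverse the chain
    have hD' : 0 < dt v2 v1 := by simp only [dt] at hneg ⊢; linarith
    obtain ⟨d, u, hd, hcop, hc2, hc1, hsec, hdet⟩ := main_pos v2 v1 hv2 hv1 hD'
    refine ⟨d, fun i => u (d - i), hd, ?_, ?_, ?_, ?_, ?_⟩
    · intro i hi; exact hcop (d - i) (by omega)
    · simpa using hc1
    · simpa using hc2
    · intro i hi
      obtain ⟨a, b, ha, hb, h1, h2⟩ := hsec (d - i) (by omega)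
      exact ⟨b, a, hb, ha, by linarith, by linarith⟩
    · intro i hi1 hi2
      have hj : d - (i - 1) = (d - i) + 1 := by omega
      have hh := hdet (d - i + 1) (by omega) (by omega)
      simp only [Nat.add_sub_cancel] at hh
      simp only [hj]
      constructor
      · rw [show (u (d - i + 1)).1 * (u (d - i)).2 - (u (d - i + 1)).2 * (u (d - i)).1
            = -((u (d - i)).1 * (u (d - i + 1)).2 - (u (d - i)).2 * (u (d - i + 1)).1)
            from by ring, abs_neg]
        exact hh.1
      · nlinarith [hh.2]
  · -- dt v1 v2 > 0
    exact main_pos v1 v2 hv1 hv2 hpos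
end

section
/- Let σ be a regular sector with boundary ray generators u1, u2 ∈ Z^2, and let u ∈ Z^2 be a primitive point in the interior of σ. Then both sectors R_+ u1 + R_+ u and R_+ u + R_+ u2 are regular if and only if u = u1 + u2. -/
/-- splitting a regular sector by an interior primitive ray yields two
regular sectors if and only if the ray is generated by the sum of the two facet
generators. -/
theorem stmt3 (u1 u2 u : ℤ × ℤ)
    (hreg : |u1.1 * u2.2 - u1.2 * u2.1| = 1)
    (hprim1 : IsCoprime u1.1 u1.2) (hprim2 : IsCoprime u2.1 u2.2)
    (hprim : IsCoprime u.1 u.2)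
    (hint : ∃ a b : ℝ, 0 < a ∧ 0 < b ∧
      (u.1 : ℝ) = a * u1.1 + b * u2.1 ∧ (u.2 : ℝ) = a * u1.2 + b * u2.2) :
    (|u1.1 * u.2 - u1.2 * u.1| = 1 ∧ |u.1 * u2.2 - u.2 * u2.1| = 1) ↔ u = u1 + u2 := by
  obtain ⟨a, b, ha, hb, h1, h2⟩ := hint
  have hDv : u1.1 * u2.2 - u1.2 * u2.1 = 1 ∨ u1.1 * u2.2 - u1.2 * u2.1 = -1 :=
    abs_eq (by norm_num) |>.mp hreg
  have hD2 : ((u1.1 * u2.2 - u1.2 * u2.1 : ℤ) : ℝ) ^ 2 = 1 := by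
    rcases hDv with h | h <;> rw [h] <;> norm_num
  have hAR : ((u.1 * u2.2 - u.2 * u2.1 : ℤ) : ℝ)
      = a * ((u1.1 * u2.2 - u1.2 * u2.1 : ℤ) : ℝ) := by
    push_cast
    rw [h1, h2]; ring
  have hBR : ((u1.1 * u.2 - u1.2 * u.1 : ℤ) : ℝ)
      = b * ((u1.1 * u2.2 - u1.2 * u2.1 : ℤ) : ℝ) := by
    push_cast
    rw [h1, h2]; ring
  have hAD : 0 < (u.1 * u2.2 - u.2 * u2.1) * (u1.1 * u2.2 - u1.2 * u2.1) := by
    have : (0:ℝ) < ((u.1 * u2.2 - u.2 * u2.1 : ℤ) : ℝ)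
        * ((u1.1 * u2.2 - u1.2 * u2.1 : ℤ) : ℝ) := by
      rw [hAR]; nlinarith [hD2]
    exact_mod_cast this
  have hBD : 0 < (u1.1 * u.2 - u1.2 * u.1) * (u1.1 * u2.2 - u1.2 * u2.1) := by
    have : (0:ℝ) < ((u1.1 * u.2 - u1.2 * u.1 : ℤ) : ℝ)
        * ((u1.1 * u2.2 - u1.2 * u2.1 : ℤ) : ℝ) := by
      rw [hBR]; nlinarith [hD2]
    exact_mod_cast this
  constructor
  · rintro ⟨hb1, ha1⟩
    have hAv := abs_eq (by norm_num : (0:ℤ) ≤ 1) |>.mp ha1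
    have hBv := abs_eq (by norm_num : (0:ℤ) ≤ 1) |>.mp hb1
    have hAeq : u.1 * u2.2 - u.2 * u2.1 = u1.1 * u2.2 - u1.2 * u2.1 := by
      rcases hAv with h | h <;> rcases hDv with h' | h' <;>
        rw [h, h'] at hAD ⊢ <;> omega
    have hBeq : u1.1 * u.2 - u1.2 * u.1 = u1.1 * u2.2 - u1.2 * u2.1 := by
      rcases hBv with h | h <;> rcases hDv with h' | h' <;>
        rw [h, h'] at hBD ⊢ <;> omega
    -- Cramer identities
    have hid1 : (u.1 * u2.2 - u.2 * u2.1) * u1.1 + (u1.1 * u.2 - u1.2 * u.1) * u2.1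
        = (u1.1 * u2.2 - u1.2 * u2.1) * u.1 := by ring
    have hid2 : (u.1 * u2.2 - u.2 * u2.1) * u1.2 + (u1.1 * u.2 - u1.2 * u.1) * u2.2
        = (u1.1 * u2.2 - u1.2 * u2.1) * u.2 := by ring
    rw [hAeq, hBeq] at hid1 hid2
    have hDne : u1.1 * u2.2 - u1.2 * u2.1 ≠ 0 := by rcases hDv with h | h <;> omega
    have e1 : u.1 = u1.1 + u2.1 := by
      have := mul_left_cancel₀ hDne (by linarith [hid1] :
        (u1.1 * u2.2 - u1.2 * u2.1) * (u1.1 + u2.1) = (u1.1 * u2.2 - u1.2 * u2.1) * u.1)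
      omega
    have e2 : u.2 = u1.2 + u2.2 := by
      have := mul_left_cancel₀ hDne (by linarith [hid2] :
        (u1.1 * u2.2 - u1.2 * u2.1) * (u1.2 + u2.2) = (u1.1 * u2.2 - u1.2 * u2.1) * u.2)
      omega
    exact Prod.ext e1 e2
  · intro h
    subst h
    constructor
    · have : u1.1 * (u1 + u2).2 - u1.2 * (u1 + u2).1 = u1.1 * u2.2 - u1.2 * u2.1 := by
        simp [Prod.fst_add, Prod.snd_add]; ring
      rw [this]; exact hreg
    · have : (u1 + u2).1 * u2.2 - (u1 + u2).2 * u2.1 = u1.1 * u2.2 - u1.2 * u2.1 := by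
        simp [Prod.fst_add, Prod.snd_add]; ring
      rw [this]; exact hreg
end

section
/- Let F : R^2 → R^2 be a homeomorphism such that there is a finite collection of linear maps L_1, ..., L_d ∈ GL(2,R) and closed sectors σ_1, ..., σ_d covering R^2 with F = L_i on σ_i for each i. If F maps Z^2 bijectively onto Z^2 and F is orientation preserving, then each L_i restricted to σ_i agrees with an element of SL(2,Z); in particular det L_i = 1 and L_i has integer entries. -/
/-- The lattice ℤ² inside ℝ² (vectors `Fin 2 → ℝ`). -/
def latticePts : Set (Fin 2 → ℝ) := {x | ∃ p : Fin 2 → ℤ, x = fun i => (p i : ℝ)}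

/-- The closed rational sector generated by lattice vectors `v, w`. -/
def sector2 (v w : Fin 2 → ℤ) : Set (Fin 2 → ℝ) :=
  {x | ∃ s t : ℝ, 0 ≤ s ∧ 0 ≤ t ∧
    x = fun i => s * (v i : ℝ) + t * (w i : ℝ)}

lemma aux_nonneg (a D M : ℝ) (hD : 1 ≤ |D|) (ha : |a| ≤ M) :
    0 ≤ M + a / D ∧ 0 ≤ M - a / D := by
  have h1 : |a / D| ≤ |a| := by
    rw [abs_div]; exact div_le_self (abs_nonneg a) hD
  have h2 := abs_le.mp (h1.trans ha)
  constructor <;> linarith [h2.1, h2.2]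

lemma key_lemma (v w : Fin 2 → ℤ) (hind : v 0 * w 1 - v 1 * w 0 ≠ 0) :
    ∃ p q r : Fin 2 → ℤ,
      (fun i => (p i : ℝ)) ∈ sector2 v w ∧
      (fun i => (q i : ℝ)) ∈ sector2 v w ∧
      (fun i => (r i : ℝ)) ∈ sector2 v w ∧
      q 0 = p 0 + 1 ∧ q 1 = p 1 ∧ r 0 = p 0 ∧ r 1 = p 1 + 1 := by
  set M : ℤ := |v 0| + |v 1| + |w 0| + |w 1| with hMdef
  have hcast : ((v 0 * w 1 - v 1 * w 0 : ℤ) : ℝ)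
      = (v 0 : ℝ) * (w 1 : ℝ) - (v 1 : ℝ) * (w 0 : ℝ) := by push_cast; ring
  have hDne : (v 0 : ℝ) * (w 1 : ℝ) - (v 1 : ℝ) * (w 0 : ℝ) ≠ 0 := by
    rw [← hcast]; exact Int.cast_ne_zero.mpr hind
  have hD1 : (1:ℝ) ≤ |(v 0 : ℝ) * (w 1 : ℝ) - (v 1 : ℝ) * (w 0 : ℝ)| := by
    rw [← hcast, ← Int.cast_abs]
    exact_mod_cast Int.one_le_abs hind
  set D : ℝ := (v 0 : ℝ) * (w 1 : ℝ) - (v 1 : ℝ) * (w 0 : ℝ) with hDdef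
  have habs : ∀ x : ℤ, |(x:ℝ)| = ((|x| : ℤ) : ℝ) := fun x => by push_cast; ring
  have hbound : ∀ x : ℤ, (x = v 0 ∨ x = v 1 ∨ x = w 0 ∨ x = w 1) → |(x:ℝ)| ≤ (M:ℝ) := by
    intro x hx
    have h0 := abs_nonneg (v 0); have h1 := abs_nonneg (v 1)
    have h2 := abs_nonneg (w 0); have h3 := abs_nonneg (w 1)
    rw [habs]
    rcases hx with h | h | h | h <;> subst h <;>
      · exact_mod_cast by omega
  have hM0 : (0:ℝ) ≤ (M:ℝ) := by
    have := hbound (v 0) (Or.inl rfl); have := abs_nonneg ((v 0 : ℝ)); linarith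
  refine ⟨![M * (v 0 + w 0), M * (v 1 + w 1)],
          ![M * (v 0 + w 0) + 1, M * (v 1 + w 1)],
          ![M * (v 0 + w 0), M * (v 1 + w 1) + 1],
          ⟨(M:ℝ), (M:ℝ), hM0, hM0, ?_⟩,
          ⟨(M:ℝ) + (w 1 : ℝ) / D, (M:ℝ) - (v 1 : ℝ) / D,
            (aux_nonneg _ D _ hD1 (hbound _ (by tauto))).1,
            (aux_nonneg _ D _ hD1 (hbound _ (by tauto))).2, ?_⟩,
          ⟨(M:ℝ) - (w 0 : ℝ) / D, (M:ℝ) + (v 0 : ℝ) / D,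
            (aux_nonneg _ D _ hD1 (hbound _ (by tauto))).2,
            (aux_nonneg _ D _ hD1 (hbound _ (by tauto))).1, ?_⟩,
          by simp, by simp, by simp, by simp⟩ <;>
  · funext j
    fin_cases j <;>
      · simp only [Fin.zero_eta, Fin.mk_one, Matrix.cons_val_zero, Matrix.cons_val_one,
          Matrix.head_cons, Fin.isValue]
        push_cast
        try field_simp
        try rw [hDdef]
        all_goals ring

/-- an orientation preserving piecewise linear homeomorphism of ℝ² mapping
ℤ² bijectively onto ℤ² has all its linear pieces in SL(2,ℤ). -/
theorem stmt6 (F : (Fin 2 → ℝ) → (Fin 2 → ℝ))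
    (hhomeo : ∃ H : (Fin 2 → ℝ) ≃ₜ (Fin 2 → ℝ), ⇑H = F)
    (hlat : F '' latticePts = latticePts)
    (d : ℕ) (L : Fin d → Matrix (Fin 2) (Fin 2) ℝ)
    (v w : Fin d → Fin 2 → ℤ)
    (hind : ∀ i, (v i 0) * (w i 1) - (v i 1) * (w i 0) ≠ 0)
    (hcover : (⋃ i, sector2 (v i) (w i)) = Set.univ)
    (hpl : ∀ i, ∀ x ∈ sector2 (v i) (w i), F x = (L i).mulVec x)
    (hor : ∀ i, 0 < (L i).det) :
    ∀ i, ∃ N : Matrix (Fin 2) (Fin 2) ℤ, N.det = 1 ∧ ∀ k l, L i k l = (N k l : ℝ) := by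
  obtain ⟨H, hH⟩ := hhomeo
  have hFinj : Function.Injective F := hH ▸ H.injective
  have hF1 : ∀ x ∈ latticePts, F x ∈ latticePts := by
    intro x hx; rw [← hlat]; exact Set.mem_image_of_mem F hx
  have hF2 : ∀ x, F x ∈ latticePts → x ∈ latticePts := by
    intro x hx
    rw [← hlat] at hx
    obtain ⟨y, hy, hyx⟩ := hx
    rwa [← hFinj hyx]
  intro i
  -- Step A: the matrix has integer entries
  obtain ⟨p, q, r, hp, hq, hr, hq0, hq1, hr0, hr1⟩ := key_lemma (v i) (w i) (hind i)
  obtain ⟨a, ha⟩ := hF1 _ ⟨p, rfl⟩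
  obtain ⟨b, hb⟩ := hF1 _ ⟨q, rfl⟩
  obtain ⟨c, hc⟩ := hF1 _ ⟨r, rfl⟩
  have mv : ∀ (x : Fin 2 → ℝ) (k : Fin 2),
      (L i).mulVec x k = L i k 0 * x 0 + L i k 1 * x 1 := by
    intro x k
    simp [Matrix.mulVec, dotProduct, Fin.sum_univ_two]
  have Ea : ∀ k, L i k 0 * (p 0 : ℝ) + L i k 1 * (p 1 : ℝ) = (a k : ℝ) := by
    intro k
    have h := ((hpl i _ hp).symm.trans ha)
    have h2 := congrFun h k
    rw [mv] at h2; exact h2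
  have Eb : ∀ k, L i k 0 * ((p 0 : ℝ) + 1) + L i k 1 * (p 1 : ℝ) = (b k : ℝ) := by
    intro k
    have h := ((hpl i _ hq).symm.trans hb)
    have h2 := congrFun h k
    rw [mv] at h2
    rw [hq0, hq1] at h2
    push_cast at h2 ⊢
    linarith
  have Ec : ∀ k, L i k 0 * (p 0 : ℝ) + L i k 1 * ((p 1 : ℝ) + 1) = (c k : ℝ) := by
    intro k
    have h := ((hpl i _ hr).symm.trans hc)
    have h2 := congrFun h k
    rw [mv] at h2
    rw [hr0, hr1] at h2
    push_cast at h2 ⊢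
    linarith
  set N : Matrix (Fin 2) (Fin 2) ℤ :=
    Matrix.of (fun k l => if l = 0 then b k - a k else c k - a k) with hNdef
  have hNL : ∀ k l, L i k l = (N k l : ℝ) := by
    intro k l
    fin_cases l
    · have := Ea k; have := Eb k
      simp only [hNdef, Matrix.of_apply, if_pos rfl]
      push_cast
      linarith
    · have := Ea k; have := Ec k
      simp only [hNdef, Matrix.of_apply]
      norm_num
      push_cast
      linarith
  -- determinant of N is positive
  have hdetN : 0 < N 0 0 * N 1 1 - N 0 1 * N 1 0 := by
    have h := hor i
    rw [Matrix.det_fin_two] at h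
    rw [hNL 0 0, hNL 0 1, hNL 1 0, hNL 1 1] at h
    exact_mod_cast h
  -- Step B: image sector
  set v' : Fin 2 → ℤ := N.mulVec (v i) with hv'
  set w' : Fin 2 → ℤ := N.mulVec (w i) with hw'
  have hvw' : ∀ k, v' k = N k 0 * v i 0 + N k 1 * v i 1 ∧
      w' k = N k 0 * w i 0 + N k 1 * w i 1 := by
    intro k
    constructor <;> simp [hv', hw', Matrix.mulVec, dotProduct, Fin.sum_univ_two, -Matrix.mulVec_fin_two]
  have hind' : v' 0 * w' 1 - v' 1 * w' 0 ≠ 0 := by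
    have e : v' 0 * w' 1 - v' 1 * w' 0
        = (N 0 0 * N 1 1 - N 0 1 * N 1 0) * (v i 0 * w i 1 - v i 1 * w i 0) := by
      rw [(hvw' 0).1, (hvw' 0).2, (hvw' 1).1, (hvw' 1).2]; ring
    rw [e]
    exact mul_ne_zero (ne_of_gt hdetN) (hind i)
  -- any lattice point of the image sector is N of a lattice point
  have main : ∀ y : Fin 2 → ℤ, (fun j => (y j : ℝ)) ∈ sector2 v' w' →
      ∃ x : Fin 2 → ℤ, ∀ k, N k 0 * x 0 + N k 1 * x 1 = y k := by
    rintro y ⟨s, t, hs, ht, hy⟩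
    set u : Fin 2 → ℝ := fun j => s * (v i j : ℝ) + t * (w i j : ℝ) with hu
    have husec : u ∈ sector2 (v i) (w i) := ⟨s, t, hs, ht, rfl⟩
    have hFu : F u = fun j => (y j : ℝ) := by
      rw [hpl i u husec]
      funext k
      have h2 := congrFun hy k
      rw [mv]
      rw [hNL k 0, hNL k 1]
      rw [(hvw' k).1, (hvw' k).2] at h2
      simp only [hu]
      push_cast at h2 ⊢
      linarith
    obtain ⟨x, hx⟩ := hF2 u (hFu ▸ ⟨y, rfl⟩)
    refine ⟨x, fun k => ?_⟩
    have h1 := congrFun hFu k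
    rw [hpl i u husec, hx, mv, hNL k 0, hNL k 1] at h1
    exact_mod_cast h1
  obtain ⟨P, Q, R, hP, hQ, hR, hQ0, hQ1, hR0, hR1⟩ := key_lemma v' w' hind'
  obtain ⟨xP, hxP⟩ := main P hP
  obtain ⟨xQ, hxQ⟩ := main Q hQ
  obtain ⟨xR, hxR⟩ := main R hR
  have h1 : N 0 0 * (xQ 0 - xP 0) + N 0 1 * (xQ 1 - xP 1) = 1 := by
    have := hxP 0; have := hxQ 0; rw [hQ0] at *; linarith
  have h2 : N 1 0 * (xQ 0 - xP 0) + N 1 1 * (xQ 1 - xP 1) = 0 := by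
    have := hxP 1; have := hxQ 1; rw [hQ1] at *; linarith
  have h3 : N 0 0 * (xR 0 - xP 0) + N 0 1 * (xR 1 - xP 1) = 0 := by
    have := hxP 0; have := hxR 0; rw [hR0] at *; linarith
  have h4 : N 1 0 * (xR 0 - xP 0) + N 1 1 * (xR 1 - xP 1) = 1 := by
    have := hxP 1; have := hxR 1; rw [hR1] at *; linarith
  have hprod : (N 0 0 * N 1 1 - N 0 1 * N 1 0) *
      ((xQ 0 - xP 0) * (xR 1 - xP 1) - (xQ 1 - xP 1) * (xR 0 - xP 0)) = 1 := by
    have e : (N 0 0 * N 1 1 - N 0 1 * N 1 0) *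
        ((xQ 0 - xP 0) * (xR 1 - xP 1) - (xQ 1 - xP 1) * (xR 0 - xP 0))
        = (N 0 0 * (xQ 0 - xP 0) + N 0 1 * (xQ 1 - xP 1))
            * (N 1 0 * (xR 0 - xP 0) + N 1 1 * (xR 1 - xP 1))
          - (N 0 0 * (xR 0 - xP 0) + N 0 1 * (xR 1 - xP 1))
            * (N 1 0 * (xQ 0 - xP 0) + N 1 1 * (xQ 1 - xP 1)) := by ring
    rw [h1, h2, h3, h4] at e
    simpa using e
  have hone : N 0 0 * N 1 1 - N 0 1 * N 1 0 = 1 := by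
    rcases Int.isUnit_iff.mp (IsUnit.of_mul_eq_one _ hprod) with h | h
    · exact h
    · omega
  exact ⟨N, by rw [Matrix.det_fin_two]; exact hone, hNL⟩
end

section
/- Let F : R^2 → R^2 be linear with matrix [[4, −3], [3, 4]]. Then the induced map on rays through the origin (equivalently, the induced circle homeomorphism x ↦ F(x)/|F(x)| on the unit circle) has irrational rotation number. -/
open Real

lemma gauss_key (q : ℕ) (hq : 0 < q)
    (h : (⟨4,3⟩ : GaussianInt) ^ q = (5 : GaussianInt) ^ q) : False := by
  have hu : Prime (⟨2,1⟩ : GaussianInt) := by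
    rw [← UniqueFactorizationMonoid.irreducible_iff_prime]
    constructor
    · intro hunit
      have h1 := Zsqrtd.norm_eq_one_iff.2 hunit
      simp [Zsqrtd.norm] at h1
    · intro a b hab
      have hn : a.norm.natAbs * b.norm.natAbs = 5 := by
        rw [← Int.natAbs_mul, ← Zsqrtd.norm_mul, ← hab]
        rfl
      rcases (Nat.prime_five.eq_one_or_self_of_dvd a.norm.natAbs ⟨_, hn.symm⟩) with h1 | h1
      · exact Or.inl (Zsqrtd.norm_eq_one_iff.1 h1)
      · refine Or.inr (Zsqrtd.norm_eq_one_iff.1 ?_)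
        rw [h1] at hn
        omega
  have hdvd5 : (⟨2,1⟩ : GaussianInt) ∣ 5 := ⟨⟨2,-1⟩, by decide⟩
  have hd : (⟨2,1⟩ : GaussianInt) ∣ (⟨4,3⟩ : GaussianInt) ^ q := by
    rw [h]; exact dvd_pow hdvd5 hq.ne'
  obtain ⟨x, hx⟩ := hu.dvd_of_dvd_pow hd
  rw [Zsqrtd.ext_iff] at hx
  simp only [Zsqrtd.re_mul, Zsqrtd.im_mul] at hx
  omega

open Real in
/-- the circle homeomorphism induced on rays by the linear map with
matrix [[4, −3], [3, 4]] (sending a unit vector `v` to `F v / ‖F v‖`) has irrational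
rotation number.  Here `f` is any lift of the induced circle map via
`θ ↦ (cos 2πθ, sin 2πθ)`. -/
theorem stmt12 (f : CircleDeg1Lift)
    (hf : ∀ θ : ℝ,
      cos (2 * π * f θ) =
        (4 * cos (2 * π * θ) - 3 * sin (2 * π * θ)) /
          Real.sqrt ((4 * cos (2 * π * θ) - 3 * sin (2 * π * θ)) ^ 2 +
            (3 * cos (2 * π * θ) + 4 * sin (2 * π * θ)) ^ 2) ∧
      sin (2 * π * f θ) =
        (3 * cos (2 * π * θ) + 4 * sin (2 * π * θ)) /
          Real.sqrt ((4 * cos (2 * π * θ) - 3 * sin (2 * π * θ)) ^ 2 +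
            (3 * cos (2 * π * θ) + 4 * sin (2 * π * θ)) ^ 2)) :
    Irrational f.translationNumber := by
  have key : ∀ x : ℝ, (4 * cos x - 3 * sin x) ^ 2 + (3 * cos x + 4 * sin x) ^ 2 = 25 := by
    intro x
    have := sin_sq_add_cos_sq x
    nlinarith
  have sqrt25 : Real.sqrt 25 = 5 := by
    rw [show (25 : ℝ) = 5 ^ 2 by norm_num, Real.sqrt_sq (by norm_num)]
  have hf' : ∀ θ : ℝ, cos (2 * π * f θ) = (4 * cos (2 * π * θ) - 3 * sin (2 * π * θ)) / 5 ∧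
      sin (2 * π * f θ) = (3 * cos (2 * π * θ) + 4 * sin (2 * π * θ)) / 5 := by
    intro θ
    have h := hf θ
    rw [key, sqrt25] at h
    exact h
  have h0 := hf' 0
  rw [mul_zero, Real.cos_zero, Real.sin_zero] at h0
  obtain ⟨hc0, hs0⟩ := h0
  norm_num at hc0 hs0
  have twopi : (2 * π : ℝ) ≠ 0 := by positivity
  have hexp : ∀ θ : ℝ, ∃ n : ℤ, f θ = θ + f 0 + n := by
    intro θ
    obtain ⟨hc, hs⟩ := hf' θ
    have hbc : cos (2 * π * f θ) = cos (2 * π * θ + 2 * π * f 0) := by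
      rw [Real.cos_add, hc, hc0, hs0]; ring
    have hbs : sin (2 * π * f θ) = sin (2 * π * θ + 2 * π * f 0) := by
      rw [Real.sin_add, hs, hc0, hs0]; ring
    have hce : Complex.exp ((2 * π * f θ : ℝ) * Complex.I) =
        Complex.exp ((2 * π * θ + 2 * π * f 0 : ℝ) * Complex.I) := by
      rw [Complex.exp_mul_I, Complex.exp_mul_I, ← Complex.ofReal_cos, ← Complex.ofReal_sin,
        ← Complex.ofReal_cos, ← Complex.ofReal_sin, hbc, hbs]
    rw [Complex.exp_eq_exp_iff_exists_int] at hce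
    obtain ⟨n, hn⟩ := hce
    refine ⟨n, ?_⟩
    have him := congrArg Complex.im hn
    simp [Complex.add_im, Complex.mul_im] at him
    have : 2 * π * f θ = 2 * π * (θ + f 0 + n) := by
      rw [him]; ring
    exact mul_left_cancel₀ twopi this
  have base : ∀ θ : ℝ, 0 ≤ θ → θ < 1 → f θ = θ + f 0 := by
    intro θ h0' h1'
    obtain ⟨n, hn⟩ := hexp θ
    have m1 : f 0 ≤ f θ := f.monotone h0'
    have m2 : f θ ≤ f 0 + 1 := by
      have h2 : f θ ≤ f (0 + 1) := f.monotone (by linarith)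
      rwa [f.map_add_one 0] at h2
    rcases eq_or_lt_of_le h0' with rfl | hpos
    · have hn' : (n : ℝ) = 0 := by linarith [hn]
      rw [hn, hn']
      ring
    · have b1 : (-1 : ℝ) < (n : ℝ) := by linarith
      have b2 : (n : ℝ) < 1 := by linarith
      have b1' : (-1 : ℤ) < n := by exact_mod_cast b1
      have b2' : n < (1 : ℤ) := by exact_mod_cast b2
      have : n = 0 := by omega
      rw [hn, this]
      push_cast
      ring
  have hfid : ∀ θ : ℝ, f θ = θ + f 0 := by
    intro θ
    have hsplit : θ = Int.fract θ + (⌊θ⌋ : ℝ) := by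
      rw [Int.fract]; ring
    calc f θ = f (Int.fract θ + (⌊θ⌋ : ℝ)) := by rw [← hsplit]
      _ = f (Int.fract θ) + (⌊θ⌋ : ℝ) := f.map_add_int _ _
      _ = Int.fract θ + f 0 + (⌊θ⌋ : ℝ) := by
          rw [base _ (Int.fract_nonneg θ) (Int.fract_lt_one θ)]
      _ = θ + f 0 := by rw [Int.fract]; ring
  have hτ : f.translationNumber = f 0 :=
    le_antisymm (f.translationNumber_le_of_le_add fun x => (hfid x).le)
      (f.le_translationNumber_of_add_le fun x => (hfid x).ge)
  rw [hτ]
  intro hirr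
  obtain ⟨r, hr⟩ := hirr
  have hq : 0 < r.den := r.pos
  have hrval : (r : ℝ) = (r.num : ℝ) / (r.den : ℝ) := by
    rw [Rat.cast_def]
  have hden : (r.den : ℝ) ≠ 0 := by positivity
  have hf0 : (r.den : ℝ) * f 0 = (r.num : ℝ) := by
    rw [← hr, hrval]
    field_simp
  have hexp1 : Complex.exp ((2 * π * f 0 : ℝ) * Complex.I) = 4 / 5 + 3 / 5 * Complex.I := by
    rw [Complex.exp_mul_I, ← Complex.ofReal_cos, ← Complex.ofReal_sin, hc0, hs0]
    push_cast
    ring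
  have hpow : ((4 : ℂ) / 5 + 3 / 5 * Complex.I) ^ r.den = 1 := by
    rw [← hexp1, ← Complex.exp_nat_mul]
    have harg : (r.den : ℂ) * ((2 * π * f 0 : ℝ) * Complex.I) =
        (r.num : ℤ) * (2 * π * Complex.I) := by
      have hfc : ((r.den : ℕ) : ℂ) * ((f 0 : ℝ) : ℂ) = ((r.num : ℤ) : ℂ) := by
        exact_mod_cast congrArg Complex.ofReal hf0
      push_cast
      linear_combination 2 * (π : ℂ) * Complex.I * hfc
    rw [harg, Complex.exp_int_mul_two_pi_mul_I]
  have h53 : ((4 : ℂ) + 3 * Complex.I) ^ r.den = 5 ^ r.den := by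
    have h5 : ((5 : ℂ)) ^ r.den ≠ 0 := pow_ne_zero _ (by norm_num)
    have h6 : (((4 : ℂ) + 3 * Complex.I) / 5) ^ r.den = 1 := by
      rw [show ((4 : ℂ) + 3 * Complex.I) / 5 = 4 / 5 + 3 / 5 * Complex.I by ring]
      exact hpow
    rw [div_pow] at h6
    field_simp at h6
    exact h6
  have hcast : ((⟨4,3⟩ : GaussianInt) : ℂ) ^ r.den = ((5 : GaussianInt) : ℂ) ^ r.den := by
    rw [GaussianInt.toComplex_def', map_ofNat]
    push_cast
    exact h53
  have : (⟨4,3⟩ : GaussianInt) ^ r.den = (5 : GaussianInt) ^ r.den := by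
    apply GaussianInt.toComplex_injective
    rw [map_pow, map_pow]
    exact hcast
  exact gauss_key r.den hq this
end

section
/- The argument of the Gaussian integer 4 + 3i is an irrational multiple of π; equivalently, arctan(3/4)/π is irrational. -/
private def a13 : ℕ → ℤ
  | 0 => 2
  | 1 => 8
  | (n + 2) => 8 * a13 (n + 1) - 25 * a13 n

private lemma a13_cos : ∀ n : ℕ,
    (a13 n : ℝ) = 2 * Real.cos (n * Real.arctan (3 / 4)) * 5 ^ n := by
  have hcos : Real.cos (Real.arctan (3 / 4)) = 4 / 5 := by
    rw [Real.cos_arctan]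
    rw [show (1 + (3 / 4 : ℝ) ^ 2) = (5 / 4) ^ 2 by norm_num,
      Real.sqrt_sq (by norm_num : (0:ℝ) ≤ 5 / 4)]
    norm_num
  intro n
  induction n using Nat.twoStepInduction with
  | zero => simp [a13]
  | one =>
      simp only [a13, Nat.cast_one, one_mul, hcos]
      push_cast; ring
  | more n ih1 ih2 =>
      have key : Real.cos ((n + 2) * Real.arctan (3 / 4)) =
          2 * Real.cos ((n + 1) * Real.arctan (3 / 4)) *
            Real.cos (Real.arctan (3 / 4)) -
          Real.cos (n * Real.arctan (3 / 4)) := by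
        have h1 : ((n : ℝ) + 2) * Real.arctan (3 / 4) =
            ((n + 1 : ℝ) * Real.arctan (3 / 4)) + Real.arctan (3 / 4) := by ring
        have h2 : ((n : ℝ)) * Real.arctan (3 / 4) =
            ((n + 1 : ℝ) * Real.arctan (3 / 4)) - Real.arctan (3 / 4) := by ring
        rw [h1, Real.cos_add, h2, Real.cos_sub]
        ring
      show (a13 (n + 2) : ℝ) = _
      rw [a13]
      push_cast
      rw [ih1, ih2] at *
      push_cast at key ⊢
      rw [key, hcos]
      ring

private instance : Fact (Nat.Prime 5) := ⟨by norm_num⟩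

private lemma a13_zmod : ∀ n : ℕ, (a13 n : ZMod 5) ≠ 0 := by
  intro n
  induction n using Nat.twoStepInduction with
  | zero => show ((2 : ℤ) : ZMod 5) ≠ 0; decide
  | one => show ((8 : ℤ) : ZMod 5) ≠ 0; decide
  | more n ih1 ih2 =>
      show ((8 * a13 (n + 1) - 25 * a13 n : ℤ) : ZMod 5) ≠ 0
      push_cast
      have h8 : (8 : ZMod 5) = 3 := by decide
      have h25 : (25 : ZMod 5) = 0 := by decide
      rw [h8, h25]
      intro h
      have h3 : (3 : ZMod 5) * ((a13 (n + 1) : ℤ) : ZMod 5) = 0 := by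
        linear_combination h
      rcases mul_eq_zero.mp h3 with h' | h'
      · exact absurd h' (by decide)
      · exact ih2 h'

private lemma a13_not_dvd (n : ℕ) : ¬ (5 : ℤ) ∣ a13 n := by
  intro h
  have h0 : (a13 n : ZMod 5) = 0 := by
    exact_mod_cast (ZMod.intCast_zmod_eq_zero_iff_dvd (a13 n) 5).mpr h
  exact a13_zmod n h0

/-- the argument of 4 + 3i is an irrational multiple of π;
equivalently arctan(3/4)/π is irrational. -/
theorem stmt13 : Irrational (Real.arctan (3 / 4) / Real.pi) := by
  rw [Irrational]
  intro ⟨q, hq⟩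
  have hpi : Real.pi ≠ 0 := Real.pi_ne_zero
  have hθ : Real.arctan (3 / 4) = q * Real.pi := by
    field_simp at hq
    linarith [hq]
  set m : ℕ := 2 * q.den with hm
  have hcosm : Real.cos (m * Real.arctan (3 / 4)) = 1 := by
    have : (m : ℝ) * Real.arctan (3 / 4) = (q.num : ℝ) * (2 * Real.pi) := by
      rw [hθ, hm]
      have hden : ((q.den : ℚ)) * q = (q.num : ℚ) := by
        have h := (div_eq_iff (by exact_mod_cast q.den_nz : ((q.den : ℚ)) ≠ 0)).mp
          (Rat.num_div_den q)
        linarith [h]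
      have hdenR : ((q.den : ℝ)) * (q : ℝ) = (q.num : ℝ) := by exact_mod_cast hden
      push_cast
      linear_combination 2 * Real.pi * hdenR
    rw [this]
    exact Real.cos_int_mul_two_pi q.num
  have := a13_cos m
  rw [hcosm] at this
  have h5 : (a13 m : ℝ) = ((2 * 5 ^ m : ℤ) : ℝ) := by push_cast; linarith [this]
  have ham : a13 m = 2 * 5 ^ m := by exact_mod_cast h5
  apply a13_not_dvd m
  rw [ham]
  have hm1 : 1 ≤ m := by
    have := q.den_pos; omega
  exact Dvd.dvd.mul_left (dvd_pow_self 5 (by omega)) 2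
end

section
/- Every primitive lattice point w in the interior of a regular sector generated by basis u1, u2 of Z^2 (det[u1 u2] = 1) can be written uniquely as w = v + v' where v, v' are primitive lattice points in the sector with det[v v'] = 1 (v, v' in counterclockwise order). -/
/-- every primitive lattice point in the interior of a regular sector has
a unique decomposition w = v + v' into primitive lattice points of the sector with
det[v v'] = 1 (the Stern–Brocot parent structure). -/
theorem stmt16 (u1 u2 : ℤ × ℤ) (hdet : u1.1 * u2.2 - u1.2 * u2.1 = 1) (w : ℤ × ℤ)
    (hprim : IsCoprime w.1 w.2)
    (hint : ∃ a b : ℤ, 0 < a ∧ 0 < b ∧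
      w = (a * u1.1 + b * u2.1, a * u1.2 + b * u2.2)) :
    ∃! p : (ℤ × ℤ) × (ℤ × ℤ),
      IsCoprime p.1.1 p.1.2 ∧ IsCoprime p.2.1 p.2.2 ∧
      (∃ a b : ℤ, 0 ≤ a ∧ 0 ≤ b ∧ p.1 = (a * u1.1 + b * u2.1, a * u1.2 + b * u2.2)) ∧
      (∃ a b : ℤ, 0 ≤ a ∧ 0 ≤ b ∧ p.2 = (a * u1.1 + b * u2.1, a * u1.2 + b * u2.2)) ∧
      p.1.1 * p.2.2 - p.1.2 * p.2.1 = 1 ∧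
      w = p.1 + p.2 := by
  obtain ⟨a, b, ha, hb, hw⟩ := hint
  obtain ⟨x, y, hxy⟩ := hprim
  have hw1 : w.1 = a * u1.1 + b * u2.1 := by rw [hw]
  have hw2 : w.2 = a * u1.2 + b * u2.2 := by rw [hw]
  rw [hw1, hw2] at hxy
  have hab : IsCoprime a b :=
    ⟨x * u1.1 + y * u1.2, x * u2.1 + y * u2.2, by linear_combination hxy⟩
  have habc := hab
  obtain ⟨s, t, hst⟩ := habc
  set c : ℤ := (t - 1) % a + 1 with hcdef
  have hc1 : 1 ≤ c := by
    have := Int.emod_nonneg (t - 1) (show a ≠ 0 by omega)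
    omega
  have hc2 : c ≤ a := by
    have := Int.emod_lt_of_pos (t - 1) ha
    omega
  have hdvd1 : a ∣ c - t := ⟨-((t - 1) / a), by rw [hcdef, Int.emod_def]; ring⟩
  have hdvd : a ∣ c * b - 1 := by
    have h1 : a ∣ t * b - 1 := ⟨-s, by linarith⟩
    have h2 : c * b - 1 = (c - t) * b + (t * b - 1) := by ring
    rw [h2]
    exact dvd_add (hdvd1.mul_right b) h1
  obtain ⟨d, hd⟩ := hdvd
  have hcb1 : 1 ≤ c * b := by nlinarith
  have hd0 : 0 ≤ d := by nlinarith
  have hdb : d ≤ b := by nlinarith [mul_le_mul_of_nonneg_right hc2 hb.le]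
  have hkey0 : c * b - d * a = 1 := by linear_combination hd
  refine ⟨((c * u1.1 + d * u2.1, c * u1.2 + d * u2.2),
           ((a - c) * u1.1 + (b - d) * u2.1, (a - c) * u1.2 + (b - d) * u2.2)),
    ⟨?_, ?_, ?_, ?_, ?_, ?_⟩, ?_⟩
  · exact ⟨(a - c) * u1.2 + (b - d) * u2.2, -((a - c) * u1.1 + (b - d) * u2.1),
      by linear_combination (c * (b - d) - d * (a - c)) * hdet + hd⟩
  · exact ⟨-(c * u1.2 + d * u2.2), c * u1.1 + d * u2.1,
      by linear_combination (c * (b - d) - d * (a - c)) * hdet + hd⟩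
  · exact ⟨c, d, by omega, hd0, rfl⟩
  · exact ⟨a - c, b - d, by omega, by omega, rfl⟩
  · linear_combination (c * (b - d) - d * (a - c)) * hdet + hd
  · rw [hw]
    simp only [Prod.mk_add_mk, Prod.mk.injEq]
    constructor <;> ring
  · rintro ⟨q1, q2⟩ ⟨hcop1, hcop2, ⟨c', d', hc'0, hd'0, hq1⟩, ⟨e', f', he'0, hf'0, hq2⟩,
      hqdet, hqsum⟩
    subst hq1 hq2
    rw [hw] at hqsum
    have h1 : a * u1.1 + b * u2.1 =
        (c' * u1.1 + d' * u2.1) + (e' * u1.1 + f' * u2.1) := congrArg Prod.fst hqsum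
    have h2 : a * u1.2 + b * u2.2 =
        (c' * u1.2 + d' * u2.2) + (e' * u1.2 + f' * u2.2) := congrArg Prod.snd hqsum
    have ha' : c' + e' = a := by
      linear_combination -u2.2 * h1 + u2.1 * h2 + (a - c' - e') * hdet
    have hb' : d' + f' = b := by
      linear_combination -u1.1 * h2 + u1.2 * h1 + (b - d' - f') * hdet
    simp only at hqdet
    have hdet' : c' * f' - d' * e' = 1 := by
      linear_combination hqdet - (c' * f' - d' * e') * hdet
    have hkey : c' * b - d' * a = 1 := by
      linear_combination -c' * hb' + d' * ha' + hdet'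
    have hc'1 : 1 ≤ c' := by
      rcases eq_or_lt_of_le hc'0 with h | h
      · exfalso
        have hd'a : (0 : ℤ) ≤ d' * a := mul_nonneg hd'0 ha.le
        nlinarith
      · omega
    have hc'2 : c' ≤ a := by omega
    have hcdvd : a ∣ c' - c :=
      hab.dvd_of_dvd_mul_right ⟨d' - d, by linear_combination hkey - hkey0⟩
    obtain ⟨k, hk⟩ := hcdvd
    have hk0 : k = 0 := by
      by_contra hne
      rcases lt_or_gt_of_ne hne with h | h
      · have h1 : a * k ≤ a * (-1) := mul_le_mul_of_nonneg_left (by omega) ha.le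
        have h2 : a * (-1) = -a := by ring
        linarith
      · have h1 : a * 1 ≤ a * k := mul_le_mul_of_nonneg_left (by omega) ha.le
        have h2 : a * 1 = a := by ring
        linarith
    have hcc : c' = c := by rw [hk0, mul_zero] at hk; omega
    have h2' : d' * a = d * a := by linear_combination hkey0 - hkey + b * hcc
    have hdd : d' = d := mul_right_cancel₀ (show a ≠ 0 by omega) h2'
    have he : e' = a - c := by omega
    have hf : f' = b - d := by omega
    rw [hcc, hdd, he, hf]
end
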